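/- Let θ, θ̂ ∈ R^d with θ ≠ 0 ≠ θ̂, let A ⊆ R^d be the unit sphere S^{d−1}, let x* = θ/‖θ‖ (the maximizer of ⟨x,θ⟩ over A) and x̂ = θ̂/‖θ̂‖ (the maximizer of ⟨x,θ̂⟩ over A). Then ⟨x*, θ⟩ − ⟨x̂, θ⟩ ≤ 2 ‖θ − θ̂‖² / ‖θ‖. -/

import Mathlib

open scoped RealInnerProductSpace

theorem stmt_17 {d : ℕ} (θ θhat : EuclideanSpace ℝ (Fin d))
    (hθ : θ ≠ 0) (hθhat : θhat ≠ 0) :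
    ⟪(‖θ‖⁻¹ • θ), θ⟫ - ⟪(‖θhat‖⁻¹ • θhat), θ⟫ ≤ 2 * ‖θ - θhat‖ ^ 2 / ‖θ‖ := by
  set u := ‖θhat‖⁻¹ • θhat with hu
  set x := ‖θ‖⁻¹ • θ with hx
  have ht : (0:ℝ) < ‖θ‖ := norm_pos_iff.mpr hθ
  have hth : (0:ℝ) < ‖θhat‖ := norm_pos_iff.mpr hθhat
  have h1 : ⟪x, θ⟫ = ‖θ‖ := by
    rw [hx, real_inner_smul_left, real_inner_self_eq_norm_sq]
    field_simp
  have hxn : ‖x‖ = 1 := by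
    rw [hx, norm_smul, norm_inv, norm_norm]
    field_simp
  have hun : ‖u‖ = 1 := by
    rw [hu, norm_smul, norm_inv, norm_norm]
    field_simp
  have h2 : ⟪u, θhat⟫ = ‖θhat‖ := by
    rw [hu, real_inner_smul_left, real_inner_self_eq_norm_sq]
    field_simp
  set L := ‖θ‖ - ⟪u, θ⟫ with hL
  have hxu : ⟪x, u⟫ = ⟪u, θ⟫ / ‖θ‖ := by
    rw [hx, real_inner_smul_left, real_inner_comm]
    field_simp
  have hnd2 : ‖x - u‖ ^ 2 = 2 * L / ‖θ‖ := by
    rw [norm_sub_sq_real, hxn, hun, hxu, hL]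
    field_simp
    ring
  have hxθh : ⟪x, θhat⟫ ≤ ‖θhat‖ := by
    calc ⟪x, θhat⟫ ≤ ‖x‖ * ‖θhat‖ := real_inner_le_norm x θhat
    _ = ‖θhat‖ := by rw [hxn, one_mul]
  have hLle : L ≤ ‖x - u‖ * ‖θ - θhat‖ := by
    have hsplit : L = ⟪x - u, θ - θhat⟫ + (⟪x, θhat⟫ - ‖θhat‖) := by
      rw [hL, inner_sub_left, inner_sub_right, inner_sub_right, h1, h2]
      ring
    calc L ≤ ⟪x - u, θ - θhat⟫ := by linarith [hsplit, hxθh]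
    _ ≤ ‖x - u‖ * ‖θ - θhat‖ := real_inner_le_norm _ _
  rcases le_or_gt L 0 with hc | hc
  · have : (0:ℝ) ≤ 2 * ‖θ - θhat‖ ^ 2 / ‖θ‖ := by positivity
    calc ⟪x, θ⟫ - ⟪u, θ⟫ = L := by rw [hL, h1]
    _ ≤ 0 := hc
    _ ≤ _ := this
  · have hsq : L ^ 2 ≤ (2 * L / ‖θ‖) * ‖θ - θhat‖ ^ 2 := by
      calc L ^ 2 ≤ (‖x - u‖ * ‖θ - θhat‖) ^ 2 := by
            have h0 : 0 ≤ ‖x - u‖ * ‖θ - θhat‖ := by positivity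
            nlinarith
      _ = ‖x - u‖ ^ 2 * ‖θ - θhat‖ ^ 2 := by ring
      _ = (2 * L / ‖θ‖) * ‖θ - θhat‖ ^ 2 := by rw [hnd2]
    have hfin : L ≤ 2 * ‖θ - θhat‖ ^ 2 / ‖θ‖ := by
      have h3 : L ^ 2 * ‖θ‖ ≤ 2 * L * ‖θ - θhat‖ ^ 2 := by
        rw [div_mul_eq_mul_div, le_div_iff₀ ht] at hsq
        linarith
      have h4 : L * (L * ‖θ‖) ≤ L * (2 * ‖θ - θhat‖ ^ 2) := by nlinarith
      have h5 := (mul_le_mul_iff_right₀ hc).mp h4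
      rw [le_div_iff₀ ht]
      linarith
    calc ⟪x, θ⟫ - ⟪u, θ⟫ = L := by rw [hL, h1]
    _ ≤ _ := hfin
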